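/- Blow-up on a finite interval (Proposition 5): Let L > 0. There is no positive function n ∈ C^{1,2}([0,∞)×[0,L]) satisfying ∂_t n(t,z) = ∂_{zz} n(t,z) + (n(t,0) − n(t,L)) ∂_z n(t,z) for t > 0, 0 < z < L, with the zero-flux boundary conditions ∂_z n(t,0) + (n(t,0) − n(t,L)) n(t,0) = 0 and ∂_z n(t,L) + (n(t,0) − n(t,L)) n(t,L) = 0 for all t ≥ 0, such that the initial profile z ↦ n(0,z) is non-increasing, the mass M = ∫₀^L n(0,z) dz satisfies M > 1, and the first moment satisfies 4 ∫₀^L z n(0,z) dz < L·M. -/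

import Mathlib

open MeasureTheory Set Filter Topology
open scoped Interval

/-- At a left-endpoint minimum the derivative is nonnegative. -/
lemma deriv_nonneg_of_left_min {f : ℝ → ℝ} {f' a b : ℝ} (hab : a < b)
    (hd : HasDerivAt f f' a) (hmin : ∀ x ∈ Icc a b, f a ≤ f x) : 0 ≤ f' := by
  have hs : HasDerivWithinAt f f' (Ioi a) a := hd.hasDerivWithinAt
  have ht : Tendsto (slope f a) (𝓝[>] a) (𝓝 f') := by
    have := hasDerivWithinAt_iff_tendsto_slope.mp hs
    simpa [Set.diff_singleton_eq_self (by simp : a ∉ Ioi a)] using this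
  refine ge_of_tendsto ht ?_
  filter_upwards [self_mem_nhdsWithin, mem_nhdsWithin_of_mem_nhds (Iio_mem_nhds hab)]
    with x hx hxb
  have hax : a < x := hx
  have : f a ≤ f x := hmin x ⟨hax.le, le_of_lt hxb⟩
  rw [slope_def_field]
  exact div_nonneg (by linarith) (by linarith)

/-- At a right-endpoint minimum the derivative is nonpositive. -/
lemma deriv_nonpos_of_right_min {f : ℝ → ℝ} {f' a b : ℝ} (hab : a < b)
    (hd : HasDerivAt f f' b) (hmin : ∀ x ∈ Icc a b, f b ≤ f x) : f' ≤ 0 := by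
  have hs : HasDerivWithinAt f f' (Iio b) b := hd.hasDerivWithinAt
  have ht : Tendsto (slope f b) (𝓝[<] b) (𝓝 f') := by
    have := hasDerivWithinAt_iff_tendsto_slope.mp hs
    simpa [Set.diff_singleton_eq_self (by simp : b ∉ Iio b)] using this
  refine le_of_tendsto ht ?_
  filter_upwards [self_mem_nhdsWithin, mem_nhdsWithin_of_mem_nhds (Ioi_mem_nhds hab)]
    with x hx hxa
  have hxb : x < b := hx
  have : f b ≤ f x := hmin x ⟨le_of_lt hxa, hxb.le⟩
  rw [slope_def_field]
  exact div_nonpos_of_nonneg_of_nonpos (by linarith) (by linarith)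

/-- At an interior minimum the derivative vanishes. -/
lemma deriv_zero_of_interior_min {f : ℝ → ℝ} {f' a b c : ℝ} (hc : c ∈ Ioo a b)
    (hd : HasDerivAt f f' c) (hmin : ∀ x ∈ Icc a b, f c ≤ f x) : f' = 0 := by
  have h : IsLocalMin f c := by
    have hmem : Icc a b ∈ 𝓝 c := Icc_mem_nhds hc.1 hc.2
    exact Filter.eventually_of_mem hmem fun x hx => hmin x hx
  exact h.hasDerivAt_eq_zero hd

/-- At an interior minimum the second derivative is nonnegative. -/
lemma deriv2_nonneg_of_interior_min {f f' : ℝ → ℝ} {f'' a b c : ℝ} (hc : c ∈ Ioo a b)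
    (hd : ∀ x ∈ Icc a b, HasDerivAt f (f' x) x) (hd' : HasDerivAt f' f'' c)
    (hmin : ∀ x ∈ Icc a b, f c ≤ f x) : 0 ≤ f'' := by
  by_contra h
  push_neg at h
  have hf'c : f' c = 0 :=
    deriv_zero_of_interior_min hc (hd c ⟨hc.1.le, hc.2.le⟩) hmin
  have ht : Tendsto (slope f' c) (𝓝[≠] c) (𝓝 f'') :=
    hasDerivAt_iff_tendsto_slope.mp hd'
  have hev : ∀ᶠ x in 𝓝[≠] c, slope f' c x < 0 := ht.eventually (eventually_lt_nhds h)
  rw [eventually_nhdsWithin_iff] at hev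
  obtain ⟨δ, hδ, hball⟩ := Metric.eventually_nhds_iff.mp hev
  set u : ℝ := min (c + δ / 2) ((c + b) / 2) with hu
  have hcu : c < u := by
    apply lt_min <;> [linarith [hc.2]; linarith [hc.2] ]
  have hub : u < b := by
    have : (c + b) / 2 < b := by linarith [hc.1, hc.2]
    exact lt_of_le_of_lt (min_le_right _ _) this
  have hneg : ∀ x ∈ Ioo c u, f' x < 0 := by
    intro x hx
    have hdist : dist x c < δ := by
      rw [Real.dist_eq, abs_of_pos (by linarith [hx.1])]
      have : x < c + δ / 2 := lt_of_lt_of_le hx.2 (min_le_left _ _)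
      linarith
    have hne : x ≠ c := ne_of_gt hx.1
    have := hball hdist hne
    rw [slope_def_field, hf'c, sub_zero] at this
    have hxc : 0 < x - c := by linarith [hx.1]
    calc f' x = (f' x / (x - c)) * (x - c) := by field_simp
    _ < 0 := mul_neg_of_neg_of_pos this hxc
  have hfc : ContinuousOn f (Icc c u) := by
    intro x hx
    exact (hd x ⟨le_trans hc.1.le hx.1, le_trans hx.2 hub.le⟩).continuousAt.continuousWithinAt
  obtain ⟨ξ, hξ, hslope⟩ := exists_hasDerivAt_eq_slope f f' hcu hfc
    (fun x hx => hd x ⟨le_trans hc.1.le hx.1.le, le_trans hx.2.le hub.le⟩)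
  have h1 : f' ξ < 0 := hneg ξ hξ
  have h2 : f u < f c := by
    have hcu' : 0 < u - c := by linarith
    have := hslope ▸ h1
    have h3 : f u - f c < 0 := by
      by_contra hge
      push_neg at hge
      exact absurd (div_nonneg hge hcu'.le) (not_le.mpr this)
    linarith
  exact absurd (hmin u ⟨le_trans hc.1.le hcu.le, hub.le⟩) (not_le.mpr h2)
/-- Two-point maximum principle: as long as `n t 0 - n t L > 0` on `[t0, t1]`, the
property of being non-increasing in space propagates from time `t0` to `[t0, t1]`. -/
lemma KS_max_principle
    (L : ℝ) (hL : 0 < L)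
    (n nt nz nzz : ℝ → ℝ → ℝ)
    (hpos : ∀ t z : ℝ, 0 ≤ t → z ∈ Icc 0 L → 0 < n t z)
    (hcont : ContinuousOn (fun p : ℝ × ℝ => n p.1 p.2) (Ici (0:ℝ) ×ˢ Icc 0 L))
    (hdt : ∀ t z : ℝ, 0 ≤ t → z ∈ Icc 0 L → HasDerivAt (fun s => n s z) (nt t z) t)
    (hdz : ∀ t z : ℝ, 0 ≤ t → z ∈ Icc 0 L → HasDerivAt (fun w => n t w) (nz t z) z)
    (hdzz : ∀ t z : ℝ, 0 ≤ t → z ∈ Icc 0 L → HasDerivAt (fun w => nz t w) (nzz t z) z)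
    (hpde : ∀ t z : ℝ, 0 < t → z ∈ Ioo 0 L →
      nt t z = nzz t z + (n t 0 - n t L) * nz t z)
    (hbc0 : ∀ t : ℝ, 0 ≤ t → nz t 0 + (n t 0 - n t L) * n t 0 = 0)
    (hbcL : ∀ t : ℝ, 0 ≤ t → nz t L + (n t 0 - n t L) * n t L = 0)
    {t0 t1 : ℝ} (ht0 : 0 ≤ t0) (ht01 : t0 < t1)
    (hb : ∀ t ∈ Icc t0 t1, 0 < n t 0 - n t L)
    (hanti : ∀ x ∈ Icc (0:ℝ) L, ∀ y ∈ Icc (0:ℝ) L, x ≤ y → n t0 y ≤ n t0 x) :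
    ∀ t ∈ Icc t0 t1, ∀ x ∈ Icc (0:ℝ) L, ∀ y ∈ Icc (0:ℝ) L, x ≤ y → n t y ≤ n t x := by
  suffices key : ∀ ε > 0, ∀ t ∈ Icc t0 t1, ∀ x ∈ Icc (0:ℝ) L, ∀ y ∈ Icc (0:ℝ) L, x ≤ y →
      n t y - n t x ≤ ε * (t - t0) by
    intro t ht x hx y hy hxy
    by_contra hlt
    push_neg at hlt
    set d := n t y - n t x with hd
    have hdpos : 0 < d := by simp only [hd]; linarith
    have hεpos : 0 < d / (2 * (t1 - t0)) := div_pos hdpos (by linarith)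
    have h1 := key _ hεpos t ht x hx y hy hxy
    have e1 : d / (2 * (t1 - t0)) * (t - t0) ≤ d / (2 * (t1 - t0)) * (t1 - t0) :=
      mul_le_mul_of_nonneg_left (by linarith [ht.2]) hεpos.le
    have e2 : d / (2 * (t1 - t0)) * (t1 - t0) = d / 2 := by
      have ht10 : t1 - t0 ≠ 0 := by linarith
      field_simp
    rw [e2] at e1
    linarith
  intro ε hε
  by_contra hbad
  push_neg at hbad
  obtain ⟨t', ht', x', hx', y', hy', hxy', hgt⟩ := hbad
  set D : ℝ × ℝ × ℝ → ℝ := fun p => n p.1 p.2.2 - n p.1 p.2.1 - ε * (p.1 - t0) with hD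
  set P : Set (ℝ × ℝ × ℝ) :=
    (Icc t0 t1 ×ˢ Icc (0:ℝ) L ×ˢ Icc (0:ℝ) L) ∩ {p | p.2.1 ≤ p.2.2} with hP
  have hPc : IsCompact P := by
    apply (isCompact_Icc.prod (isCompact_Icc.prod isCompact_Icc)).inter_right
    exact isClosed_le (continuous_fst.comp continuous_snd) (continuous_snd.comp continuous_snd)
  have hmemP : ∀ p : ℝ × ℝ × ℝ, p ∈ P →
      p.1 ∈ Icc t0 t1 ∧ p.2.1 ∈ Icc (0:ℝ) L ∧ p.2.2 ∈ Icc (0:ℝ) L ∧ p.2.1 ≤ p.2.2 := by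
    intro p hp
    exact ⟨hp.1.1, hp.1.2.1, hp.1.2.2, hp.2⟩
  have hDc : ContinuousOn D P := by
    have c2 : ContinuousOn (fun p : ℝ × ℝ × ℝ => n p.1 p.2.2) P := by
      apply hcont.comp ((continuous_fst.prodMk (continuous_snd.comp continuous_snd)).continuousOn)
      intro p hp
      obtain ⟨h1, _, h3, _⟩ := hmemP p hp
      exact ⟨le_trans ht0 h1.1, h3⟩
    have c1 : ContinuousOn (fun p : ℝ × ℝ × ℝ => n p.1 p.2.1) P := by
      apply hcont.comp ((continuous_fst.prodMk (continuous_fst.comp continuous_snd)).continuousOn)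
      intro p hp
      obtain ⟨h1, h2, _, _⟩ := hmemP p hp
      exact ⟨le_trans ht0 h1.1, h2⟩
    exact (c2.sub c1).sub
      ((continuous_const.mul (continuous_fst.sub continuous_const)).continuousOn)
  have hne : P.Nonempty := by
    refine ⟨(t0, 0, 0), ⟨⟨le_refl _, ht01.le⟩, ⟨le_refl _, hL.le⟩, ⟨le_refl _, hL.le⟩⟩, ?_⟩
    show (0:ℝ) ≤ 0
    exact le_refl 0
  obtain ⟨q, hqP, hqmax⟩ := hPc.exists_isMaxOn hne hDc
  obtain ⟨s, x, y⟩ := q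
  obtain ⟨hs, hx, hy, hxy⟩ := hmemP _ hqP
  simp only at hs hx hy hxy
  have hs0 : (0:ℝ) ≤ s := le_trans ht0 hs.1
  have hmemP' : (⟨t', x', y'⟩ : ℝ × ℝ × ℝ) ∈ P := ⟨⟨ht', hx', hy'⟩, hxy'⟩
  have hqpos : 0 < D (s, x, y) := by
    have h1 : D (t', x', y') ≤ D (s, x, y) := hqmax hmemP'
    have h2 : 0 < D (t', x', y') := by simp only [hD]; linarith
    linarith
  have hst0 : t0 < s := by
    rcases eq_or_lt_of_le hs.1 with h | h
    · exfalso
      have : D (s, x, y) = n t0 y - n t0 x := by simp only [hD, ← h]; ring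
      have := hanti x hx y hy hxy
      simp only [hD] at hqpos
      rw [← h] at hqpos
      nlinarith
    · exact h
  have hspos : (0:ℝ) < s := lt_of_le_of_lt ht0 hst0
  have hxylt : x < y := by
    rcases eq_or_lt_of_le hxy with h | h
    · exfalso
      simp only [hD, h] at hqpos
      nlinarith
    · exact h
  have hbs : 0 < n s 0 - n s L := hb s hs
  -- case x = 0
  rcases eq_or_lt_of_le hx.1 with hx0 | hx0
  · -- x = 0 : minimum of n s · on [0, y] at the left endpoint
    have hmin : ∀ x'' ∈ Icc (0:ℝ) y, n s 0 ≤ n s x'' := by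
      intro x'' hx''
      have hPm : (⟨s, x'', y⟩ : ℝ × ℝ × ℝ) ∈ P :=
        ⟨⟨hs, ⟨hx''.1, le_trans hx''.2 hy.2⟩, hy⟩, hx''.2⟩
      have := hqmax hPm
      simp only [hD, Set.mem_setOf_eq, ← hx0] at this ⊢
      linarith
    have hd0 : 0 ≤ nz s 0 := by
      refine deriv_nonneg_of_left_min (lt_of_le_of_lt hx.1 hxylt) (hdz s 0 hs0 ?_) hmin
      exact ⟨le_refl _, hL.le⟩
    have hbc := hbc0 s hs0
    have hp0 := hpos s 0 hs0 ⟨le_refl _, hL.le⟩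
    nlinarith
  -- case y = L
  rcases eq_or_lt_of_le hy.2 with hyL | hyL
  case inr.inl =>
    -- y = L : maximum of n s · on [x, L] at the right endpoint
    have hmax : ∀ y'' ∈ Icc x L, (fun w => -n s w) L ≤ (fun w => -n s w) y'' := by
      intro y'' hy''
      have hPm : (⟨s, x, y''⟩ : ℝ × ℝ × ℝ) ∈ P :=
        ⟨⟨hs, hx, ⟨le_trans hx.1 hy''.1, hy''.2⟩⟩, hy''.1⟩
      have := hqmax hPm
      simp only [hD, Set.mem_setOf_eq, hyL] at this ⊢
      linarith
    have hd0 : -nz s L ≤ 0 := by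
      refine deriv_nonpos_of_right_min (lt_of_lt_of_le hxylt hy.2) ((hdz s L hs0 ?_).neg) hmax
      exact ⟨hL.le, le_refl _⟩
    have hbc := hbcL s hs0
    have hpL := hpos s L hs0 ⟨hL.le, le_refl _⟩
    nlinarith
  case inr.inr =>
    -- interior case : 0 < x < y < L
    have hxI : x ∈ Ioo (0:ℝ) y := ⟨hx0, hxylt⟩
    have hyI : y ∈ Ioo x L := ⟨hxylt, hyL⟩
    have hminx : ∀ x'' ∈ Icc (0:ℝ) y, n s x ≤ n s x'' := by
      intro x'' hx''
      have hPm : (⟨s, x'', y⟩ : ℝ × ℝ × ℝ) ∈ P :=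
        ⟨⟨hs, ⟨hx''.1, le_trans hx''.2 hy.2⟩, hy⟩, hx''.2⟩
      have := hqmax hPm
      simp only [hD, Set.mem_setOf_eq] at this
      linarith
    have hmaxy : ∀ y'' ∈ Icc x L, (fun w => -n s w) y ≤ (fun w => -n s w) y'' := by
      intro y'' hy''
      have hPm : (⟨s, x, y''⟩ : ℝ × ℝ × ℝ) ∈ P :=
        ⟨⟨hs, hx, ⟨le_trans hx.1 hy''.1, hy''.2⟩⟩, hy''.1⟩
      have := hqmax hPm
      simp only [hD, Set.mem_setOf_eq] at this ⊢
      linarith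
    have hsubx : ∀ u ∈ Icc (0:ℝ) y, u ∈ Icc (0:ℝ) L := fun u hu => ⟨hu.1, le_trans hu.2 hy.2⟩
    have hsuby : ∀ u ∈ Icc x L, u ∈ Icc (0:ℝ) L := fun u hu => ⟨le_trans hx.1 hu.1, hu.2⟩
    have hzx : nz s x = 0 :=
      deriv_zero_of_interior_min hxI (hdz s x hs0 hx) hminx
    have hzzx : 0 ≤ nzz s x :=
      deriv2_nonneg_of_interior_min hxI
        (fun u hu => hdz s u hs0 (hsubx u hu)) (hdzz s x hs0 hx) hminx
    have hzy : -nz s y = 0 :=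
      deriv_zero_of_interior_min hyI ((hdz s y hs0 hy).neg) hmaxy
    have hzzy : 0 ≤ -nzz s y := by
      refine deriv2_nonneg_of_interior_min (f := fun w => -n s w) (f' := fun w => -nz s w) hyI
        (fun u hu => (hdz s u hs0 (hsuby u hu)).neg) ((hdzz s y hs0 hy).neg) hmaxy
    -- time direction
    set h : ℝ → ℝ := fun t => n t y - n t x - ε * (t - t0) with hh
    have hdh : HasDerivAt h (nt s y - nt s x - ε) s := by
      have d1 := (hdt s y hs0 hy).sub (hdt s x hs0 hx)
      have d2 : HasDerivAt (fun t : ℝ => ε * (t - t0)) ε s := by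
        simpa using ((hasDerivAt_id s).sub_const t0).const_mul ε
      exact d1.sub d2
    have hmint : ∀ t ∈ Icc t0 s, (fun t => -h t) s ≤ (fun t => -h t) t := by
      intro t ht
      have hPm : (⟨t, x, y⟩ : ℝ × ℝ × ℝ) ∈ P :=
        ⟨⟨⟨ht.1, le_trans ht.2 hs.2⟩, hx, hy⟩, hxy⟩
      have := hqmax hPm
      simp only [hD, hh, Set.mem_setOf_eq] at this ⊢
      linarith
    have hdtle : -(nt s y - nt s x - ε) ≤ 0 :=
      deriv_nonpos_of_right_min hst0 hdh.neg hmint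
    -- PDE
    have hpdex := hpde s x hspos ⟨hx0, lt_of_lt_of_le hxylt hy.2⟩
    have hpdey := hpde s y hspos ⟨lt_of_le_of_lt hx.1 hxylt, hyL⟩
    rw [hzx, mul_zero, add_zero] at hpdex
    have hzy' : nz s y = 0 := by linarith
    rw [hzy', mul_zero, add_zero] at hpdey
    have : nt s y - nt s x ≤ 0 := by rw [hpdex, hpdey]; linarith
    linarith
lemma contOn_intervalIntegrable {L : ℝ} (hL : 0 ≤ L) {f : ℝ → ℝ}
    (h : ContinuousOn f (Icc 0 L)) : IntervalIntegrable f volume 0 L :=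
  ContinuousOn.intervalIntegrable (by rwa [uIcc_of_le hL])

lemma slice_z_continuousOn {L : ℝ} {F : ℝ → ℝ → ℝ}
    (h : ContinuousOn (fun p : ℝ × ℝ => F p.1 p.2) (Ici (0:ℝ) ×ˢ Icc 0 L))
    {t : ℝ} (ht : 0 ≤ t) : ContinuousOn (fun z => F t z) (Icc 0 L) := by
  apply h.comp ((continuous_const.prodMk continuous_id).continuousOn)
  intro z hz
  exact ⟨ht, hz⟩

lemma slice_t_continuousOn {L : ℝ} {F : ℝ → ℝ → ℝ}
    (h : ContinuousOn (fun p : ℝ × ℝ => F p.1 p.2) (Ici (0:ℝ) ×ˢ Icc 0 L))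
    {z : ℝ} (hz : z ∈ Icc (0:ℝ) L) : ContinuousOn (fun t => F t z) (Ici 0) := by
  apply h.comp ((continuous_id.prodMk continuous_const).continuousOn)
  intro t ht
  exact ⟨ht, hz⟩

lemma param_integral_hasDerivAt (L : ℝ) (hL : 0 < L) (F Ft : ℝ → ℝ → ℝ)
    (hFt : ContinuousOn (fun p : ℝ × ℝ => Ft p.1 p.2) (Ici (0:ℝ) ×ˢ Icc 0 L))
    (hF : ∀ t z : ℝ, 0 ≤ t → z ∈ Icc 0 L → HasDerivAt (fun s => F s z) (Ft t z) t)
    (hFc : ∀ t : ℝ, 0 ≤ t → ContinuousOn (fun z => F t z) (Icc 0 L))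
    {t0 : ℝ} (ht0 : 0 < t0) :
    HasDerivAt (fun t => ∫ z in (0:ℝ)..L, F t z) (∫ z in (0:ℝ)..L, Ft t0 z) t0 := by
  have hIsub : Ι (0:ℝ) L ⊆ Icc 0 L := by
    rw [uIoc_of_le hL.le]
    exact Ioc_subset_Icc_self
  have hK : IsCompact (Icc (t0/2) (t0 + t0/2) ×ˢ Icc (0:ℝ) L) :=
    isCompact_Icc.prod isCompact_Icc
  have hsub : Icc (t0/2) (t0 + t0/2) ×ˢ Icc (0:ℝ) L ⊆ Ici 0 ×ˢ Icc 0 L := by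
    apply prod_mono _ subset_rfl
    intro u hu
    have : (0:ℝ) < t0 / 2 := by positivity
    exact le_trans this.le hu.1
  obtain ⟨C, hC⟩ := hK.exists_bound_of_continuousOn (hFt.mono hsub)
  have hball : ∀ x ∈ Metric.ball t0 (t0/2), x ∈ Icc (t0/2) (t0 + t0/2) := by
    intro x hx
    rw [Metric.mem_ball, Real.dist_eq, abs_lt] at hx
    constructor <;> linarith [hx.1, hx.2]
  refine (intervalIntegral.hasDerivAt_integral_of_dominated_loc_of_deriv_le
      (F := F) (F' := Ft) (bound := fun _ => C) (s := Metric.ball t0 (t0/2)) (Metric.ball_mem_nhds _ (by positivity))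
      ?_ ?_ ?_ ?_ ?_ ?_).2
  · filter_upwards [Ioi_mem_nhds ht0] with x hx
    exact (ContinuousOn.mono (hFc x (le_of_lt hx)) hIsub).aestronglyMeasurable measurableSet_uIoc
  · exact contOn_intervalIntegrable hL.le (hFc t0 ht0.le)
  · exact (ContinuousOn.mono (slice_z_continuousOn hFt ht0.le) hIsub).aestronglyMeasurable
      measurableSet_uIoc
  · refine Filter.Eventually.of_forall fun z hz x hx => ?_
    exact hC (x, z) ⟨hball x hx, hIsub hz⟩
  · exact intervalIntegrable_const
  · refine Filter.Eventually.of_forall fun z hz x hx => ?_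
    have hx0 : (0:ℝ) ≤ x := by
      have := (hball x hx).1
      linarith [ht0]
    exact hF x z hx0 (hIsub hz)

lemma param_integral_continuousOn (L : ℝ) (hL : 0 < L) (F : ℝ → ℝ → ℝ)
    (hF : ContinuousOn (fun p : ℝ × ℝ => F p.1 p.2) (Ici (0:ℝ) ×ˢ Icc 0 L)) :
    ContinuousOn (fun t => ∫ z in (0:ℝ)..L, F t z) (Ici 0) := by
  have hIsub : Ι (0:ℝ) L ⊆ Icc 0 L := by
    rw [uIoc_of_le hL.le]
    exact Ioc_subset_Icc_self
  intro t0 ht0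
  have hK : IsCompact (Icc (0:ℝ) (t0+1) ×ˢ Icc (0:ℝ) L) := isCompact_Icc.prod isCompact_Icc
  obtain ⟨C, hC⟩ := hK.exists_bound_of_continuousOn
    (hF.mono (prod_mono (Icc_subset_Ici_self) subset_rfl))
  apply intervalIntegral.continuousWithinAt_of_dominated_interval (bound := fun _ => C)
  · filter_upwards [self_mem_nhdsWithin] with x hx
    exact (ContinuousOn.mono (slice_z_continuousOn hF hx) hIsub).aestronglyMeasurable
      measurableSet_uIoc
  · filter_upwards [self_mem_nhdsWithin,
      mem_nhdsWithin_of_mem_nhds (Iio_mem_nhds (lt_add_one t0))] with x hx hx1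
    refine Filter.Eventually.of_forall fun z hz => ?_
    exact hC (x, z) ⟨⟨hx, hx1.le⟩, hIsub hz⟩
  · exact intervalIntegrable_const
  · refine Filter.Eventually.of_forall fun z hz => ?_
    exact slice_t_continuousOn hF (hIsub hz) t0 ht0
section Identities

variable {L : ℝ} {n nt nz nzz : ℝ → ℝ → ℝ}

lemma ae_pde_uIoc (hL : 0 < L)
    (hpde : ∀ t z : ℝ, 0 < t → z ∈ Ioo 0 L →
      nt t z = nzz t z + (n t 0 - n t L) * nz t z)
    {t0 : ℝ} (ht0 : 0 < t0) {c : ℝ} :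
    ∀ᵐ z : ℝ, z ∈ Ι (0:ℝ) L → c * nt t0 z =
      c * (nzz t0 z + (n t0 0 - n t0 L) * nz t0 z) := by
  have h0 : (volume : Measure ℝ) {L} = 0 := measure_singleton L
  have h1 : ∀ᵐ z : ℝ, z ∉ ({L} : Set ℝ) := measure_eq_zero_iff_ae_notMem.mp h0
  filter_upwards [h1] with z hzL hz
  rw [uIoc_of_le hL.le] at hz
  have hzL' : z < L := lt_of_le_of_ne hz.2 (by simpa using hzL)
  rw [hpde t0 z ht0 ⟨hz.1, hzL'⟩]

lemma mass_integral_nt (hL : 0 < L)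
    (hcont : ContinuousOn (fun p : ℝ × ℝ => n p.1 p.2) (Ici (0:ℝ) ×ˢ Icc 0 L))
    (hcont_z : ContinuousOn (fun p : ℝ × ℝ => nz p.1 p.2) (Ici (0:ℝ) ×ˢ Icc 0 L))
    (hcont_zz : ContinuousOn (fun p : ℝ × ℝ => nzz p.1 p.2) (Ici (0:ℝ) ×ˢ Icc 0 L))
    (hdz : ∀ t z : ℝ, 0 ≤ t → z ∈ Icc 0 L → HasDerivAt (fun w => n t w) (nz t z) z)
    (hdzz : ∀ t z : ℝ, 0 ≤ t → z ∈ Icc 0 L → HasDerivAt (fun w => nz t w) (nzz t z) z)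
    (hpde : ∀ t z : ℝ, 0 < t → z ∈ Ioo 0 L →
      nt t z = nzz t z + (n t 0 - n t L) * nz t z)
    (hbc0 : ∀ t : ℝ, 0 ≤ t → nz t 0 + (n t 0 - n t L) * n t 0 = 0)
    (hbcL : ∀ t : ℝ, 0 ≤ t → nz t L + (n t 0 - n t L) * n t L = 0)
    {t0 : ℝ} (ht0 : 0 < t0) :
    ∫ z in (0:ℝ)..L, nt t0 z = 0 := by
  set b : ℝ := n t0 0 - n t0 L with hb
  have hcongr : ∫ z in (0:ℝ)..L, nt t0 z
      = ∫ z in (0:ℝ)..L, (nzz t0 z + b * nz t0 z) := by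
    apply intervalIntegral.integral_congr_ae
    have := ae_pde_uIoc (n := n) (nt := nt) (nz := nz) (nzz := nzz) hL hpde ht0 (c := 1)
    filter_upwards [this] with z hz hzmem
    simpa using hz hzmem
  have hanti : ∀ z ∈ uIcc (0:ℝ) L,
      HasDerivAt (fun w => nz t0 w + b * n t0 w) (nzz t0 z + b * nz t0 z) z := by
    intro z hz
    rw [uIcc_of_le hL.le] at hz
    exact (hdzz t0 z ht0.le hz).add ((hdz t0 z ht0.le hz).const_mul b)
  have hint : IntervalIntegrable (fun z => nzz t0 z + b * nz t0 z) volume 0 L := by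
    apply contOn_intervalIntegrable hL.le
    exact (slice_z_continuousOn hcont_zz ht0.le).add
      ((continuousOn_const).mul (slice_z_continuousOn hcont_z ht0.le))
  rw [hcongr, intervalIntegral.integral_eq_sub_of_hasDerivAt hanti hint]
  have h1 := hbc0 t0 ht0.le
  have h2 := hbcL t0 ht0.le
  rw [← hb] at h1 h2
  linarith

lemma moment_integral_nt (hL : 0 < L)
    (hcont : ContinuousOn (fun p : ℝ × ℝ => n p.1 p.2) (Ici (0:ℝ) ×ˢ Icc 0 L))
    (hcont_z : ContinuousOn (fun p : ℝ × ℝ => nz p.1 p.2) (Ici (0:ℝ) ×ˢ Icc 0 L))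
    (hcont_zz : ContinuousOn (fun p : ℝ × ℝ => nzz p.1 p.2) (Ici (0:ℝ) ×ˢ Icc 0 L))
    (hdz : ∀ t z : ℝ, 0 ≤ t → z ∈ Icc 0 L → HasDerivAt (fun w => n t w) (nz t z) z)
    (hdzz : ∀ t z : ℝ, 0 ≤ t → z ∈ Icc 0 L → HasDerivAt (fun w => nz t w) (nzz t z) z)
    (hpde : ∀ t z : ℝ, 0 < t → z ∈ Ioo 0 L →
      nt t z = nzz t z + (n t 0 - n t L) * nz t z)
    (hbc0 : ∀ t : ℝ, 0 ≤ t → nz t 0 + (n t 0 - n t L) * n t 0 = 0)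
    (hbcL : ∀ t : ℝ, 0 ≤ t → nz t L + (n t 0 - n t L) * n t L = 0)
    {t0 : ℝ} (ht0 : 0 < t0) :
    ∫ z in (0:ℝ)..L, z * nt t0 z
      = (n t0 0 - n t0 L) * (1 - ∫ z in (0:ℝ)..L, n t0 z) := by
  set b : ℝ := n t0 0 - n t0 L with hb
  set g : ℝ → ℝ := fun z => z * nz t0 z + b * (z * n t0 z) - n t0 z with hg
  set g' : ℝ → ℝ := fun z => (1 * nz t0 z + z * nzz t0 z)
      + b * (1 * n t0 z + z * nz t0 z) - nz t0 z with hg'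
  have hanti : ∀ z ∈ uIcc (0:ℝ) L, HasDerivAt g (g' z) z := by
    intro z hz
    rw [uIcc_of_le hL.le] at hz
    exact (((hasDerivAt_id z).mul (hdzz t0 z ht0.le hz)).add
      (((hasDerivAt_id z).mul (hdz t0 z ht0.le hz)).const_mul b)).sub (hdz t0 z ht0.le hz)
  have hslice_n := slice_z_continuousOn hcont ht0.le
  have hslice_nz := slice_z_continuousOn hcont_z ht0.le
  have hslice_nzz := slice_z_continuousOn hcont_zz ht0.le
  have hintg' : IntervalIntegrable g' volume 0 L := by
    apply contOn_intervalIntegrable hL.le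
    exact (((continuousOn_const.mul hslice_nz).add
        (continuousOn_id.mul hslice_nzz)).add
      (continuousOn_const.mul ((continuousOn_const.mul hslice_n).add
        (continuousOn_id.mul hslice_nz)))).sub hslice_nz
  have hintn : IntervalIntegrable (fun z => b * n t0 z) volume 0 L :=
    contOn_intervalIntegrable hL.le (continuousOn_const.mul hslice_n)
  have hcongr : ∫ z in (0:ℝ)..L, z * nt t0 z
      = ∫ z in (0:ℝ)..L, (g' z - b * n t0 z) := by
    apply intervalIntegral.integral_congr_ae
    have hae := ae_pde_uIoc (n := n) (nt := nt) (nz := nz) (nzz := nzz) hL hpde ht0 (c := 1)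
    filter_upwards [hae] with z hz hzmem
    have := hz hzmem
    simp only [one_mul] at this
    simp only [hg', hb]
    rw [this]
    ring
  have hsub : ∫ z in (0:ℝ)..L, (g' z - b * n t0 z)
      = (∫ z in (0:ℝ)..L, g' z) - ∫ z in (0:ℝ)..L, b * n t0 z :=
    intervalIntegral.integral_sub hintg' hintn
  have hftc : ∫ z in (0:ℝ)..L, g' z = g L - g 0 :=
    intervalIntegral.integral_eq_sub_of_hasDerivAt hanti hintg'
  have hconstmul : ∫ z in (0:ℝ)..L, b * n t0 z = b * ∫ z in (0:ℝ)..L, n t0 z :=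
    intervalIntegral.integral_const_mul b _
  rw [hcongr, hsub, hftc, hconstmul]
  have h1 := hbc0 t0 ht0.le
  have h2 := hbcL t0 ht0.le
  rw [← hb] at h1 h2
  simp only [hg]
  have hgL : L * nz t0 L + b * (L * n t0 L) - n t0 L = - n t0 L := by nlinarith
  have hg0 : (0:ℝ) * nz t0 0 + b * ((0:ℝ) * n t0 0) - n t0 0 = - n t0 0 := by ring
  rw [hgL, hg0]
  simp only [hb]
  ring

end Identities
/-- For a non-increasing `f` on `[0,L]`,
`(L/2)·∫f - ∫ z f ≤ (f 0 - f L) L²/8`. -/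
lemma symmetrization_ineq (L : ℝ) (hL : 0 < L) (f : ℝ → ℝ)
    (hfc : ContinuousOn f (Icc 0 L))
    (hanti : ∀ x ∈ Icc (0:ℝ) L, ∀ y ∈ Icc (0:ℝ) L, x ≤ y → f y ≤ f x) :
    L * (∫ z in (0:ℝ)..L, f z) / 2 - (∫ z in (0:ℝ)..L, z * f z)
      ≤ (f 0 - f L) * L ^ 2 / 8 := by
  set F : ℝ → ℝ := fun z => (L / 2 - z) * f z with hF
  have hFc : ContinuousOn F (Icc 0 L) :=
    ((continuousOn_const).sub continuousOn_id).mul hfc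
  have hint : IntervalIntegrable F volume 0 L := contOn_intervalIntegrable hL.le hFc
  have hint1 : IntervalIntegrable F volume 0 (L / 2) := by
    apply ContinuousOn.intervalIntegrable
    rw [uIcc_of_le (by linarith)]
    exact hFc.mono (Icc_subset_Icc (le_refl _) (by linarith))
  have hint2 : IntervalIntegrable F volume (L / 2) L := by
    apply ContinuousOn.intervalIntegrable
    rw [uIcc_of_le (by linarith)]
    exact hFc.mono (Icc_subset_Icc (by linarith) (le_refl _))
  have hintf : IntervalIntegrable f volume 0 L := contOn_intervalIntegrable hL.le hfc
  have hintzf : IntervalIntegrable (fun z => z * f z) volume 0 L :=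
    contOn_intervalIntegrable hL.le (continuousOn_id.mul hfc)
  -- step A
  have hA : ∫ z in (0:ℝ)..L, F z
      = L * (∫ z in (0:ℝ)..L, f z) / 2 - ∫ z in (0:ℝ)..L, z * f z := by
    have : ∫ z in (0:ℝ)..L, F z
        = (∫ z in (0:ℝ)..L, (L / 2) * f z) - ∫ z in (0:ℝ)..L, z * f z := by
      rw [← intervalIntegral.integral_sub
        (contOn_intervalIntegrable (f := fun z => L / 2 * f z) hL.le (continuousOn_const.mul hfc)) hintzf]
      apply intervalIntegral.integral_congr
      intro z _
      simp only [hF]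
      ring
    rw [this, intervalIntegral.integral_const_mul]
    ring
  -- step B : split
  have hB : ∫ z in (0:ℝ)..L, F z
      = (∫ z in (0:ℝ)..(L/2), F z) + ∫ z in (L/2)..L, F z :=
    (intervalIntegral.integral_add_adjacent_intervals hint1 hint2).symm
  -- step C : reflect the second piece
  have hC : ∫ z in (L/2)..L, F z = ∫ z in (0:ℝ)..(L/2), F (L - z) := by
    have h := intervalIntegral.integral_comp_sub_left (a := (0:ℝ)) (b := L/2) F L
    have h2 : L - L / 2 = L / 2 := by ring
    have h3 : L - 0 = L := by ring
    rw [h2, h3] at h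
    exact h.symm
  -- integrability of reflected piece
  have hintr : IntervalIntegrable (fun z => F (L - z)) volume 0 (L/2) := by
    apply ContinuousOn.intervalIntegrable
    rw [uIcc_of_le (by linarith)]
    apply hFc.comp ((continuous_const.sub continuous_id).continuousOn)
    intro z hz
    simp only [Pi.sub_apply, id_eq]
    have h1 : (0:ℝ) ≤ z := hz.1
    have h2 : z ≤ L / 2 := hz.2
    exact ⟨by linarith, by linarith⟩
  -- step D+E : bound the combined integrand
  have hE : (∫ z in (0:ℝ)..(L/2), F z) + (∫ z in (0:ℝ)..(L/2), F (L - z))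
      ≤ ∫ z in (0:ℝ)..(L/2), (L / 2 - z) * (f 0 - f L) := by
    rw [← intervalIntegral.integral_add hint1 hintr]
    apply intervalIntegral.integral_mono_on (by linarith)
    · exact hint1.add hintr
    · apply ContinuousOn.intervalIntegrable
      rw [uIcc_of_le (by linarith)]
      exact (continuousOn_const.sub continuousOn_id).mul continuousOn_const
    · intro z hz
      have hz0 : (0:ℝ) ≤ z := hz.1
      have hzL2 : z ≤ L / 2 := hz.2
      have hzm : z ∈ Icc (0:ℝ) L := ⟨hz0, by linarith⟩
      have hLzm : L - z ∈ Icc (0:ℝ) L := ⟨by linarith, by linarith⟩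
      have h1 : f z ≤ f 0 := hanti 0 ⟨le_refl _, hL.le⟩ z hzm hz0
      have h2 : f L ≤ f (L - z) := hanti (L - z) hLzm L ⟨hL.le, le_refl _⟩ (by linarith)
      have hco : (0:ℝ) ≤ L / 2 - z := by linarith
      have hrw : F z + F (L - z) = (L / 2 - z) * (f z - f (L - z)) := by
        simp only [hF]
        ring
      rw [hrw]
      apply mul_le_mul_of_nonneg_left _ hco
      linarith
  -- step F : compute the right-hand side
  have hFv : ∫ z in (0:ℝ)..(L/2), (L / 2 - z) * (f 0 - f L)
      = (f 0 - f L) * L ^ 2 / 8 := by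
    have : (fun z => (L / 2 - z) * (f 0 - f L)) = fun z => (f 0 - f L) * (L / 2) - (f 0 - f L) * z := by
      funext z
      ring
    rw [this, intervalIntegral.integral_sub
      (intervalIntegrable_const) ((intervalIntegral.intervalIntegrable_id).const_mul _),
      intervalIntegral.integral_const_mul, intervalIntegral.integral_const_mul, integral_id,
      intervalIntegral.integral_const]
    simp only [smul_eq_mul]
    ring
  calc L * (∫ z in (0:ℝ)..L, f z) / 2 - (∫ z in (0:ℝ)..L, z * f z)
      = (∫ z in (0:ℝ)..(L/2), F z) + ∫ z in (L/2)..L, F z := by rw [← hA, ← hB]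
    _ = (∫ z in (0:ℝ)..(L/2), F z) + ∫ z in (0:ℝ)..(L/2), F (L - z) := by rw [hC]
    _ ≤ ∫ z in (0:ℝ)..(L/2), (L / 2 - z) * (f 0 - f L) := hE
    _ = (f 0 - f L) * L ^ 2 / 8 := hFv
/-- Blow-up on a finite interval (Proposition 5): there is no positive classical
solution of the boundary Keller–Segel equation on `[0,∞) × [0,L]` with
non-increasing initial profile, super-critical mass `M > 1` and small first
moment `4 ∫ z n₀ < L M`. -/
theorem blowup_finite_interval
    (L : ℝ) (hL : 0 < L)
    (n nt nz nzz : ℝ → ℝ → ℝ)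
    (hpos : ∀ t z : ℝ, 0 ≤ t → z ∈ Icc 0 L → 0 < n t z)
    -- regularity (C^{1,2}): continuity of n and of its derivatives
    (hcont : ContinuousOn (fun p : ℝ × ℝ => n p.1 p.2) (Ici (0:ℝ) ×ˢ Icc 0 L))
    (hcont_t : ContinuousOn (fun p : ℝ × ℝ => nt p.1 p.2) (Ici (0:ℝ) ×ˢ Icc 0 L))
    (hcont_z : ContinuousOn (fun p : ℝ × ℝ => nz p.1 p.2) (Ici (0:ℝ) ×ˢ Icc 0 L))
    (hcont_zz : ContinuousOn (fun p : ℝ × ℝ => nzz p.1 p.2) (Ici (0:ℝ) ×ˢ Icc 0 L))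
    (hdt : ∀ t z : ℝ, 0 ≤ t → z ∈ Icc 0 L → HasDerivAt (fun s => n s z) (nt t z) t)
    (hdz : ∀ t z : ℝ, 0 ≤ t → z ∈ Icc 0 L → HasDerivAt (fun w => n t w) (nz t z) z)
    (hdzz : ∀ t z : ℝ, 0 ≤ t → z ∈ Icc 0 L → HasDerivAt (fun w => nz t w) (nzz t z) z)
    -- the equation on the finite interval
    (hpde : ∀ t z : ℝ, 0 < t → z ∈ Ioo 0 L →
      nt t z = nzz t z + (n t 0 - n t L) * nz t z)
    -- zero-flux boundary conditions at both endpoints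
    (hbc0 : ∀ t : ℝ, 0 ≤ t → nz t 0 + (n t 0 - n t L) * n t 0 = 0)
    (hbcL : ∀ t : ℝ, 0 ≤ t → nz t L + (n t 0 - n t L) * n t L = 0)
    -- non-increasing initial profile
    (hmono : AntitoneOn (fun z => n 0 z) (Icc 0 L))
    -- super-critical mass
    (hM : 1 < ∫ z in (0:ℝ)..L, n 0 z)
    -- small first moment: 4 ∫ z n₀ < L M
    (hmom : 4 * ∫ z in (0:ℝ)..L, z * n 0 z < L * ∫ z in (0:ℝ)..L, n 0 z) :
    False := by
  set M : ℝ → ℝ := fun t => ∫ z in (0:ℝ)..L, n t z with hMdef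
  set J : ℝ → ℝ := fun t => ∫ z in (0:ℝ)..L, z * n t z with hJdef
  set b : ℝ → ℝ := fun t => n t 0 - n t L with hbdef
  have h0m : (0:ℝ) ∈ Icc (0:ℝ) L := ⟨le_refl _, hL.le⟩
  have hLm : L ∈ Icc (0:ℝ) L := ⟨hL.le, le_refl _⟩
  -- continuity of the mass and the first moment
  have hMc : ContinuousOn M (Ici 0) := param_integral_continuousOn L hL n hcont
  have hJc : ContinuousOn J (Ici 0) := by
    apply param_integral_continuousOn L hL (fun t z => z * n t z)
    exact (continuous_snd.continuousOn).mul hcont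
  -- derivatives of the mass and the first moment
  have hMd : ∀ t : ℝ, 0 < t → HasDerivAt M 0 t := by
    intro t ht
    have h := param_integral_hasDerivAt L hL n nt hcont_t hdt
      (fun s hs => slice_z_continuousOn hcont hs) ht
    rwa [mass_integral_nt hL hcont hcont_z hcont_zz hdz hdzz hpde hbc0 hbcL ht] at h
  have hJd : ∀ t : ℝ, 0 < t → HasDerivAt J (b t * (1 - M t)) t := by
    intro t ht
    have h := param_integral_hasDerivAt L hL (fun t z => z * n t z) (fun t z => z * nt t z)
      ((continuous_snd.continuousOn).mul hcont_t)
      (fun u z hu hz => (hdt u z hu hz).const_mul z)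
      (fun u hu => (continuousOn_id.mul (slice_z_continuousOn hcont hu))) ht
    rwa [moment_integral_nt hL hcont hcont_z hcont_zz hdz hdzz hpde hbc0 hbcL ht] at h
  -- mass conservation
  have hMconst : ∀ t, 0 ≤ t → M t = M 0 := by
    intro t ht
    rcases eq_or_lt_of_le ht with h | h
    · rw [← h]
    · have hmono1 : MonotoneOn M (Icc 0 t) := by
        apply monotoneOn_of_hasDerivWithinAt_nonneg (convex_Icc 0 t)
          (hMc.mono Icc_subset_Ici_self) (f' := fun _ => (0:ℝ))
        · intro x hx
          rw [interior_Icc] at hx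
          exact (hMd x hx.1).hasDerivWithinAt
        · intro x _
          exact le_refl 0
      have hanti1 : AntitoneOn M (Icc 0 t) := by
        apply antitoneOn_of_hasDerivWithinAt_nonpos (convex_Icc 0 t)
          (hMc.mono Icc_subset_Ici_self) (f' := fun _ => (0:ℝ))
        · intro x hx
          rw [interior_Icc] at hx
          exact (hMd x hx.1).hasDerivWithinAt
        · intro x _
          exact le_refl 0
      have h1 : (0:ℝ) ∈ Icc (0:ℝ) t := ⟨le_refl _, ht⟩
      have h2 : t ∈ Icc (0:ℝ) t := ⟨ht, le_refl _⟩
      exact le_antisymm (hanti1 h1 h2 ht) (hmono1 h1 h2 ht)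
  -- J is nonnegative
  have hJnonneg : ∀ t, 0 ≤ t → 0 ≤ J t := by
    intro t ht
    exact intervalIntegral.integral_nonneg hL.le
      (fun u hu => mul_nonneg hu.1 (hpos t u ht hu).le)
  -- the constant β
  set β : ℝ := 8 * (L * M 0 / 2 - J 0) / L ^ 2 with hβdef
  have hK0 : 0 < L * M 0 / 2 - J 0 := by
    have : 0 < L * M 0 := by nlinarith
    linarith [hmom]
  have hβ : 0 < β := by
    have hL2 : (0:ℝ) < L ^ 2 := by positivity
    exact div_pos (by linarith) hL2
  -- while the profile is non-increasing, b stays at least β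
  have hW : ∀ T, 0 ≤ T →
      (∀ s ∈ Icc (0:ℝ) T, ∀ x ∈ Icc (0:ℝ) L, ∀ y ∈ Icc (0:ℝ) L, x ≤ y → n s y ≤ n s x) →
      ∀ s ∈ Icc (0:ℝ) T, β ≤ b s := by
    intro T hT hAs s hs
    have hbnn : ∀ u ∈ Icc (0:ℝ) T, 0 ≤ b u := by
      intro u hu
      have := hAs u hu 0 h0m L hLm hL.le
      simp only [hbdef]
      linarith
    have hJanti : AntitoneOn J (Icc 0 T) := by
      apply antitoneOn_of_hasDerivWithinAt_nonpos (convex_Icc 0 T)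
        (hJc.mono Icc_subset_Ici_self) (f' := fun u => b u * (1 - M u))
      · intro x hx
        rw [interior_Icc] at hx
        exact (hJd x hx.1).hasDerivWithinAt
      · intro x hx
        rw [interior_Icc] at hx
        have hb0 := hbnn x ⟨hx.1.le, hx.2.le⟩
        have hM1 : M x = M 0 := hMconst x hx.1.le
        have : 1 - M x ≤ 0 := by rw [hM1]; linarith
        exact mul_nonpos_of_nonneg_of_nonpos hb0 this
    have hJle : J s ≤ J 0 := by
      have h1 : (0:ℝ) ∈ Icc (0:ℝ) T := ⟨le_refl _, hT⟩
      exact hJanti h1 hs hs.1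
    have hsym := symmetrization_ineq L hL (fun z => n s z)
      (slice_z_continuousOn hcont hs.1) (hAs s hs)
    have hMs : M s = M 0 := hMconst s hs.1
    have hL2 : (0:ℝ) < L ^ 2 := by positivity
    rw [hβdef, div_le_iff₀ hL2]
    have hsym' : L * M s / 2 - J s ≤ b s * L ^ 2 / 8 := hsym
    rw [hMs] at hsym'
    nlinarith [hsym', hJle]
  -- the profile stays non-increasing for all time
  have hAall : ∀ t, 0 ≤ t →
      ∀ x ∈ Icc (0:ℝ) L, ∀ y ∈ Icc (0:ℝ) L, x ≤ y → n t y ≤ n t x := by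
    by_contra hcon
    push_neg at hcon
    obtain ⟨t2, ht2, x2, hx2, y2, hy2, hxy2, hlt2⟩ := hcon
    set Bad : Set ℝ := {t | 0 ≤ t ∧
      ¬ (∀ x ∈ Icc (0:ℝ) L, ∀ y ∈ Icc (0:ℝ) L, x ≤ y → n t y ≤ n t x)} with hBad
    have hBadne : Bad.Nonempty := by
      refine ⟨t2, ht2, ?_⟩
      push_neg
      exact ⟨x2, hx2, y2, hy2, hxy2, hlt2⟩
    have hBadbdd : BddBelow Bad := ⟨0, fun u hu => hu.1⟩
    set T := sInf Bad with hT
    have hT0 : 0 ≤ T := le_csInf hBadne (fun u hu => hu.1)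
    have hbefore : ∀ s, 0 ≤ s → s < T →
        ∀ x ∈ Icc (0:ℝ) L, ∀ y ∈ Icc (0:ℝ) L, x ≤ y → n s y ≤ n s x := by
      intro s hs0 hsT
      by_contra hns
      have : T ≤ s := csInf_le hBadbdd ⟨hs0, hns⟩
      linarith
    have hAT : ∀ x ∈ Icc (0:ℝ) L, ∀ y ∈ Icc (0:ℝ) L, x ≤ y → n T y ≤ n T x := by
      intro x hx y hy hxy
      rcases eq_or_lt_of_le hT0 with h0 | h0
      · rw [← h0]
        exact hmono hx hy hxy
      · have hclos : T ∈ closure (Ico 0 T) := by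
          rw [closure_Ico (ne_of_lt h0)]
          exact ⟨hT0, le_refl _⟩
        have hNB : (𝓝[Ico (0:ℝ) T] T).NeBot := mem_closure_iff_nhdsWithin_neBot.mp hclos
        have hsubIci : Ico (0:ℝ) T ⊆ Ici 0 := fun u hu => hu.1
        have hf : ContinuousWithinAt (fun s => n s x - n s y) (Ico 0 T) T := by
          have c1 := ((slice_t_continuousOn hcont hx) T hT0).mono hsubIci
          have c2 := ((slice_t_continuousOn hcont hy) T hT0).mono hsubIci
          exact c1.sub c2
        have hev : ∀ᶠ s in 𝓝[Ico (0:ℝ) T] T, 0 ≤ n s x - n s y := by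
          filter_upwards [self_mem_nhdsWithin] with s hs
          have := hbefore s hs.1 hs.2 x hx y hy hxy
          linarith
        have hlim : 0 ≤ n T x - n T y := ge_of_tendsto hf hev
        linarith
    have hAIcc : ∀ s ∈ Icc (0:ℝ) T,
        ∀ x ∈ Icc (0:ℝ) L, ∀ y ∈ Icc (0:ℝ) L, x ≤ y → n s y ≤ n s x := by
      intro s hs
      rcases eq_or_lt_of_le hs.2 with h | h
      · rw [h]
        exact hAT
      · exact hbefore s hs.1 h
    have hbT : β ≤ b T := hW T hT0 hAIcc T ⟨hT0, le_refl _⟩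
    have hbcw : ContinuousWithinAt b (Ici 0) T := by
      have c1 := (slice_t_continuousOn hcont h0m) T hT0
      have c2 := (slice_t_continuousOn hcont hLm) T hT0
      exact c1.sub c2
    have hev2 : ∀ᶠ s in 𝓝[Ici (0:ℝ)] T, β / 2 < b s :=
      hbcw.eventually (eventually_gt_nhds (lt_of_lt_of_le (half_lt_self hβ) hbT))
    rw [eventually_iff, Metric.mem_nhdsWithin_iff] at hev2
    obtain ⟨δ, hδ, hball⟩ := hev2
    set t1 := T + δ / 2 with ht1
    have hbpos : ∀ s ∈ Icc T t1, 0 < b s := by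
      intro s hs
      have h1 : s ∈ Metric.ball T δ ∩ Ici 0 := by
        constructor
        · rw [Metric.mem_ball, Real.dist_eq, abs_of_nonneg (by linarith [hs.1])]
          have := hs.2
          rw [ht1] at this
          linarith
        · exact le_trans hT0 hs.1
      have := hball h1
      rw [mem_setOf_eq] at this
      exact lt_trans (half_pos hβ) this
    have hMP := KS_max_principle L hL n nt nz nzz hpos hcont hdt hdz hdzz hpde hbc0 hbcL
      hT0 (by rw [ht1]; linarith : T < t1) hbpos hAT
    have hlb : ∀ u ∈ Bad, t1 ≤ u := by
      intro u hu
      by_contra hul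
      push_neg at hul
      have hAu : ∀ x ∈ Icc (0:ℝ) L, ∀ y ∈ Icc (0:ℝ) L, x ≤ y → n u y ≤ n u x := by
        rcases le_or_gt u T with h | h
        · exact hAIcc u ⟨hu.1, h⟩
        · exact hMP u ⟨h.le, hul.le⟩
      exact hu.2 hAu
    have hcontra : t1 ≤ T := le_csInf hBadne hlb
    rw [ht1] at hcontra
    linarith
  -- uniform decay of the first moment
  have hbge : ∀ t, 0 ≤ t → β ≤ b t := by
    intro t ht
    exact hW t ht (fun s hs => hAall s hs.1) t ⟨ht, le_refl _⟩
  set c : ℝ := (M 0 - 1) * β with hc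
  have hcpos : 0 < c := mul_pos (by linarith) hβ
  have hfanti : ∀ T, 0 ≤ T → J T + c * T ≤ J 0 := by
    intro T hT
    rcases eq_or_lt_of_le hT with h | h
    · rw [← h]
      simp
    · have hanti : AntitoneOn (fun u => J u + c * u) (Icc 0 T) := by
        apply antitoneOn_of_hasDerivWithinAt_nonpos (convex_Icc 0 T)
          ((hJc.mono Icc_subset_Ici_self).add
            ((continuous_const.mul continuous_id).continuousOn))
          (f' := fun u => b u * (1 - M u) + c)
        · intro x hx
          rw [interior_Icc] at hx
          have hcu : HasDerivAt (fun u : ℝ => c * u) c x := by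
            simpa using (hasDerivAt_id x).const_mul c
          exact ((hJd x hx.1).add hcu).hasDerivWithinAt
        · intro x hx
          rw [interior_Icc] at hx
          have h1 := hbge x hx.1.le
          have h2 := hMconst x hx.1.le
          rw [h2, hc]
          nlinarith [mul_nonneg (by linarith : (0:ℝ) ≤ M 0 - 1)
            (by linarith : (0:ℝ) ≤ b x - β)]
      have h1 : (0:ℝ) ∈ Icc (0:ℝ) T := ⟨le_refl _, hT⟩
      have h2 : T ∈ Icc (0:ℝ) T := ⟨hT, le_refl _⟩
      have := hanti h1 h2 hT
      simpa using this
  set T0 : ℝ := (J 0 + 1) / c with hT0def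
  have hJ0 : 0 ≤ J 0 := hJnonneg 0 (le_refl _)
  have hT0pos : 0 < T0 := div_pos (by linarith) hcpos
  have h1 := hfanti T0 hT0pos.le
  have h2 : c * T0 = J 0 + 1 := by
    rw [hT0def]
    field_simp
  have h3 := hJnonneg T0 hT0pos.le
  linarith
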